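/- (Example 2.5.20) Regard ℤ as a group vector space over the group ℤ with action n • x = n·x (in the paper this space appears as the diagonal quadruples {(a,a,a,a) : a ∈ ℤ}). The subset W = {x : ℤ | x is not a unit} is a group vector subspace (n·x ∈ W whenever x ∈ W and n ∈ ℤ), the full space ℤ is generated by the single element 1 (every x equals x·1), yet every subset T ⊆ W which generates W — i.e. such that each x ∈ W equals n·t for some n ∈ ℤ and t ∈ T — is infinite. Hence a one-dimensional group vector space possesses a proper group vector subspace of infinite dimension. -/
import Mathlib


/-- Example 2.5.20: in the group vector space `ℤ` over the group `ℤ` (action by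
multiplication), the set `W` of non-units is a group vector subspace, the whole
space is generated by the single element `1`, yet every generating subset of `W`
is infinite. -/
theorem example_2_5_20 :
    (∀ n : ℤ, ∀ x ∈ {x : ℤ | ¬ IsUnit x}, n * x ∈ {x : ℤ | ¬ IsUnit x}) ∧
    (∀ x : ℤ, ∃ n : ℤ, x = n * 1) ∧
    (∀ T : Set ℤ, T ⊆ {x : ℤ | ¬ IsUnit x} →
      (∀ x ∈ {x : ℤ | ¬ IsUnit x}, ∃ n : ℤ, ∃ t ∈ T, x = n * t) →
      T.Infinite) := by
  refine ⟨?_, fun x => ⟨x, (mul_one x).symm⟩, ?_⟩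
  · intro n x hx hu
    exact hx (isUnit_of_mul_isUnit_right hu)
  · intro T hTW hgen hfin
    have hprimes : {p : ℕ | p.Prime} ⊆ Int.natAbs '' T := by
      intro p hp
      have hpW : (p : ℤ) ∈ {x : ℤ | ¬ IsUnit x} := by
        simp only [Set.mem_setOf_eq, Int.isUnit_iff]
        intro h
        rcases h with h | h
        · exact hp.one_lt.ne' (by exact_mod_cast h)
        · omega
      obtain ⟨n, t, htT, ht⟩ := hgen _ hpW
      have htd : t ∣ (p : ℤ) := ⟨n, by rw [ht]; ring⟩
      have htnd : t.natAbs ∣ p := by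
        rwa [Int.natAbs_dvd_natAbs.symm, Int.natAbs_natCast] at htd
      have htnu : t.natAbs ≠ 1 := by
        intro h1
        exact hTW htT (Int.isUnit_iff_natAbs_eq.mpr h1)
      have := (Nat.Prime.eq_one_or_self_of_dvd hp _ htnd).resolve_left htnu
      exact ⟨t, htT, this⟩
    exact Nat.infinite_setOf_prime ((hfin.image _).subset hprimes)
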